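/- Write s_{:,i} = (s_{1,i},…,s_{N_r,i}) ∈ ℂ^{N_r} and suppose the vectors s_{:,1},…,s_{:,N_s} are linearly independent over ℂ (so in particular N_s ≤ N_r). Then the set of achievable objective values of the block-level PM slot-invariant problem equals that of the block-level PM slot-variant problem: { ∑_{i=1}^{N_s} ‖W s_{:,i}‖² : W ∈ ℂ^{N_t×N_r}, CI_i(W s_{:,i}, 1) for all i } = { ∑_{i=1}^{N_s} ‖x_i‖² : x_i ∈ ℂ^{N_t}, CI_i(x_i, 1) for all i }. In particular the two problems have the same optimal value. -/
import Mathlib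


open scoped BigOperators

/-- The constructive-interference (CI) constraint in a given symbol slot:
`CI Nt Nr M h s γ σ x t` holds iff for every user `k`,
`Re((h_kᵀ x)/s_k) − |Im((h_kᵀ x)/s_k)| / tan(π/M) ≥ t·√(γ_k)·σ`. -/
noncomputable def CI (Nt Nr M : ℕ) (h : Fin Nr → Fin Nt → ℂ)
    (s : Fin Nr → ℂ) (γ : Fin Nr → ℝ) (σ : ℝ)
    (x : Fin Nt → ℂ) (t : ℝ) : Prop :=
  ∀ k : Fin Nr,
    ((∑ j, h k j * x j) / s k).re -
        |((∑ j, h k j * x j) / s k).im| / Real.tan (Real.pi / M) ≥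
      t * Real.sqrt (γ k) * σ

/-- Given linearly independent vectors `s_{:,i}` and arbitrary targets `x i`,
there is a matrix `W` with `W s_{:,i} = x i` for all `i`. -/
lemma exists_matrix_mapping (Nt Nr Ns : ℕ)
    (s : Fin Nr → Fin Ns → ℂ)
    (hLI : LinearIndependent ℂ (fun i : Fin Ns => fun k : Fin Nr => s k i))
    (x : Fin Ns → Fin Nt → ℂ) :
    ∃ W : Matrix (Fin Nt) (Fin Nr) ℂ,
      ∀ i, W.mulVec (fun k => s k i) = x i := by
  -- the linear map c ↦ ∑ i c i • s_{:,i}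
  set B : Matrix (Fin Nr) (Fin Ns) ℂ := Matrix.of (fun k i => s k i) with hB
  set f : (Fin Ns → ℂ) →ₗ[ℂ] (Fin Nr → ℂ) := Matrix.mulVecLin B with hf
  have hker : LinearMap.ker f = ⊥ := by
    rw [LinearMap.ker_eq_bot']
    intro c hc
    have := (Fintype.linearIndependent_iff.mp hLI) c ?_
    · funext i; exact this i
    · funext k
      have := congrFun hc k
      simpa [hf, hB, Matrix.mulVecLin, Matrix.mulVec, dotProduct,
        mul_comm] using this
  obtain ⟨g, hg⟩ := f.exists_leftInverse_of_injective hker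
  set X : (Fin Ns → ℂ) →ₗ[ℂ] (Fin Nt → ℂ) :=
    Matrix.mulVecLin (Matrix.of (fun j i => x i j)) with hX
  refine ⟨LinearMap.toMatrix' (X.comp g), ?_⟩
  intro i
  have h1 : (fun k => s k i) = f (Pi.single i 1) := by
    funext k
    simp [hf, hB, Matrix.mulVecLin, Matrix.mulVec, dotProduct, Pi.single_apply,
      mul_ite]
  have h2 : (LinearMap.toMatrix' (X.comp g)).mulVec (fun k => s k i)
      = (X.comp g) (fun k => s k i) := by
    rw [← Matrix.toLin'_apply, Matrix.toLin'_toMatrix']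
  rw [h2, h1]
  have h3 : g (f (Pi.single i 1)) = Pi.single i 1 := by
    have := congrFun (congrArg DFunLike.coe hg) (Pi.single i 1)
    simpa using this
  simp only [LinearMap.comp_apply, h3]
  funext j
  simp [hX, Matrix.mulVecLin, Matrix.mulVec, dotProduct, Pi.single_apply,
    mul_ite]

/-- If the data-symbol vectors `s_{:,1},…,s_{:,N_s}` are linearly independent over
`ℂ`, the sets of achievable objective values of the block-level PM slot-invariant
and slot-variant problems coincide; in particular the optimal values agree. -/
theorem stmt16 (Nt Nr Ns M : ℕ) (hNt : 0 < Nt) (hNr : 0 < Nr) (hNs : 0 < Ns)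
    (hM : 3 ≤ M)
    (h : Fin Nr → Fin Nt → ℂ)
    (s : Fin Nr → Fin Ns → ℂ) (hs : ∀ k i, s k i ≠ 0)
    (γ : Fin Nr → Fin Ns → ℝ) (hγ : ∀ k i, 0 ≤ γ k i)
    (σ : ℝ) (hσ : 0 < σ)
    (hLI : LinearIndependent ℂ (fun i : Fin Ns => fun k : Fin Nr => s k i)) :
    {v : ℝ | ∃ W : Matrix (Fin Nt) (Fin Nr) ℂ,
        (∀ i, CI Nt Nr M h (fun k => s k i) (fun k => γ k i) σ
          (W.mulVec fun k => s k i) 1) ∧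
        v = ∑ i, ∑ j, ‖W.mulVec (fun k => s k i) j‖ ^ 2}
    = {v : ℝ | ∃ x : Fin Ns → Fin Nt → ℂ,
        (∀ i, CI Nt Nr M h (fun k => s k i) (fun k => γ k i) σ (x i) 1) ∧
        v = ∑ i, ∑ j, ‖x i j‖ ^ 2} ∧
    sInf {v : ℝ | ∃ W : Matrix (Fin Nt) (Fin Nr) ℂ,
        (∀ i, CI Nt Nr M h (fun k => s k i) (fun k => γ k i) σ
          (W.mulVec fun k => s k i) 1) ∧
        v = ∑ i, ∑ j, ‖W.mulVec (fun k => s k i) j‖ ^ 2}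
    = sInf {v : ℝ | ∃ x : Fin Ns → Fin Nt → ℂ,
        (∀ i, CI Nt Nr M h (fun k => s k i) (fun k => γ k i) σ (x i) 1) ∧
        v = ∑ i, ∑ j, ‖x i j‖ ^ 2} := by
  have hset : {v : ℝ | ∃ W : Matrix (Fin Nt) (Fin Nr) ℂ,
        (∀ i, CI Nt Nr M h (fun k => s k i) (fun k => γ k i) σ
          (W.mulVec fun k => s k i) 1) ∧
        v = ∑ i, ∑ j, ‖W.mulVec (fun k => s k i) j‖ ^ 2}
      = {v : ℝ | ∃ x : Fin Ns → Fin Nt → ℂ,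
        (∀ i, CI Nt Nr M h (fun k => s k i) (fun k => γ k i) σ (x i) 1) ∧
        v = ∑ i, ∑ j, ‖x i j‖ ^ 2} := by
    ext v
    constructor
    · rintro ⟨W, hCI, hv⟩
      exact ⟨fun i => W.mulVec (fun k => s k i), hCI, hv⟩
    · rintro ⟨x, hCI, hv⟩
      obtain ⟨W, hW⟩ := exists_matrix_mapping Nt Nr Ns s hLI x
      refine ⟨W, fun i => ?_, ?_⟩
      · rw [hW i]; exact hCI i
      · rw [hv]; congr 1; funext i; rw [hW i]
  exact ⟨hset, by rw [hset]⟩
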